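/- For every integer t ≥ 2 and every integer n ≥ t, every edge-coloring of K_{n,n} using at most ⌊n/t⌋ colors contains a copy of K_{2,t} with no odd color class; consequently r_odd(K_{n,n}, K_{2,t}) > n/t. -/

import Mathlib

open Finset

/-- The edge set of a copy of `K_{2,t}` in `K_{n,n}`: two vertices in one part and `t`
vertices in the other part, together with all edges between them.  An edge of `K_{n,n}`
is a pair `(x, y)` with `x` in the first part and `y` in the second part. -/
def isK2tCopy (n t : ℕ) (E : Finset (Fin n × Fin n)) : Prop :=
  (∃ P S : Finset (Fin n), P.card = 2 ∧ S.card = t ∧ E = P ×ˢ S) ∨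
  (∃ P S : Finset (Fin n), P.card = 2 ∧ S.card = t ∧ E = S ×ˢ P)

/-- Under an edge-coloring `c`, the copy with edge set `E` has an odd color class. -/
def hasOddColorClass {α : Type*} [DecidableEq α] {N : ℕ} (c : α → Fin N)
    (E : Finset α) : Prop :=
  ∃ i : Fin N, Odd (E.filter fun e => c e = i).card

/-- The odd Ramsey number `r_odd(K_{n,n}, K_{2,t})`. -/
noncomputable def oddRamseyK2t (n t : ℕ) : ℕ :=
  sInf {N : ℕ | ∃ c : Fin n × Fin n → Fin N,
    ∀ E : Finset (Fin n × Fin n), isK2tCopy n t E → hasOddColorClass c E}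

/-- For every `t ≥ 2` and every `n ≥ t`, every edge-coloring of `K_{n,n}` using at most
`⌊n/t⌋` colors contains a copy of `K_{2,t}` with no odd color class; consequently
`r_odd(K_{n,n}, K_{2,t}) > n/t`. -/
lemma nat_cs {ι : Type*} (s : Finset ι) (f : ι → ℕ) :
    (∑ i ∈ s, f i)^2 ≤ s.card * ∑ i ∈ s, f i^2 := by
  have h := sq_sum_le_card_mul_sum_sq (s := s) (f := fun i => (f i : ℤ))
  exact_mod_cast h

-- key combinatorial lemma
lemma exists_agree (t n N : ℕ) (ht : 2 ≤ t) (hn : t ≤ n) (hN1 : 1 ≤ N) (hNt : t * N ≤ n)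
    (c : Fin n × Fin n → Fin N) :
    ∃ y z : Fin n, y ≠ z ∧ t ≤ (univ.filter fun x => c (x, y) = c (x, z)).card := by
  by_contra hcon
  push_neg at hcon
  set a : Fin n → Fin n → ℕ := fun y z => (univ.filter fun x => c (x, y) = c (x, z)).card with ha
  set m : Fin n → Fin N → ℕ := fun x i => (univ.filter fun y => c (x, y) = i).card with hm
  have hmsum : ∀ x : Fin n, ∑ i, m x i = n := by
    intro x
    have := Finset.card_eq_sum_card_fiberwise
      (f := fun y : Fin n => c (x, y)) (s := univ) (t := univ) (fun y _ => mem_univ _)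
    simpa [hm] using this.symm
  -- double counting
  have hdc : ∑ x : Fin n, ∑ i : Fin N, (m x i)^2 = ∑ y : Fin n, ∑ z : Fin n, a y z := by
    have : ∀ x : Fin n, ∑ i : Fin N, (m x i)^2
        = ∑ y : Fin n, ∑ z : Fin n, (if c (x, y) = c (x, z) then 1 else 0) := by
      intro x
      simp only [hm, sq, Finset.card_filter, Finset.sum_mul_sum]
      rw [Finset.sum_comm]
      congr 1
      ext y
      rw [Finset.sum_comm]
      congr 1
      ext z
      simp only [ite_mul, one_mul, zero_mul]
      rw [Finset.sum_ite_eq univ (c (x, y)) (fun i => if c (x, z) = i then 1 else 0)]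
      simp [eq_comm]
    simp only [this, ha, Finset.card_filter]
    rw [Finset.sum_comm]
    congr 1; ext y
    rw [Finset.sum_comm]
  -- Cauchy–Schwarz lower bound
  have hcs : n^2 * n^2 ≤ (n * N) * ∑ x : Fin n, ∑ i : Fin N, (m x i)^2 := by
    have h := nat_cs (univ : Finset (Fin n × Fin N)) (fun p => m p.1 p.2)
    have h1 : ∑ p : Fin n × Fin N, m p.1 p.2 = n * n := by
      rw [Fintype.sum_prod_type]
      simp [hmsum]
    have h2 : ∑ p : Fin n × Fin N, (m p.1 p.2)^2 = ∑ x : Fin n, ∑ i : Fin N, (m x i)^2 := by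
      rw [Fintype.sum_prod_type]
    rw [h1, h2] at h
    calc n^2 * n^2 = (n * n)^2 := by ring
    _ ≤ (univ : Finset (Fin n × Fin N)).card * ∑ x : Fin n, ∑ i : Fin N, (m x i)^2 := h
    _ = (n * N) * ∑ x : Fin n, ∑ i : Fin N, (m x i)^2 := by simp [Finset.card_univ]
  -- upper bound from hcon
  have hdiag : ∀ y : Fin n, a y y = n := by
    intro y; simp [ha]
  have hup : ∑ y : Fin n, ∑ z : Fin n, a y z ≤ n * (n + (n - 1) * (t - 1)) := by
    have hb : ∀ y : Fin n, ∑ z : Fin n, a y z ≤ n + (n - 1) * (t - 1) := by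
      intro y
      have hsplit : ∑ z : Fin n, a y z = ∑ z ∈ univ.erase y, a y z + a y y := by
        rw [Finset.sum_erase_add _ _ (mem_univ y)]
      have hrest : ∑ z ∈ univ.erase y, a y z ≤ (univ.erase y).card * (t - 1) := by
        apply Finset.sum_le_card_nsmul
        intro z hz
        have hzy : z ≠ y := (Finset.mem_erase.1 hz).1
        exact Nat.le_pred_of_lt (hcon y z (Ne.symm hzy))
      rw [Finset.card_erase_of_mem (mem_univ y), Finset.card_univ, Fintype.card_fin] at hrest
      rw [hsplit, hdiag]
      omega
    calc ∑ y : Fin n, ∑ z : Fin n, a y z ≤ ∑ _y : Fin n, (n + (n - 1) * (t - 1)) :=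
          Finset.sum_le_sum (fun y _ => hb y)
    _ = n * (n + (n - 1) * (t - 1)) := by
          rw [Finset.sum_const, Finset.card_univ, Fintype.card_fin, smul_eq_mul]
  -- contradiction
  rw [hdc] at hcs
  have key : (n * N) * (n * (n + (n - 1) * (t - 1))) < n^2 * n^2 := by
    obtain ⟨u, rfl⟩ : ∃ u, t = u + 1 := ⟨t - 1, by omega⟩
    obtain ⟨v, rfl⟩ : ∃ v, n = v + 1 := ⟨n - 1, by omega⟩
    simp only [Nat.add_sub_cancel]
    have hu : 1 ≤ u := by omega
    have hv : 1 ≤ v := by omega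
    have hNt' : (u + 1) * N ≤ v + 1 := hNt
    nlinarith [Nat.mul_le_mul_right (v+1) hNt', Nat.mul_pos (Nat.lt_of_lt_of_le Nat.zero_lt_one hN1) (Nat.lt_of_lt_of_le Nat.zero_lt_one hu), hv, hu, hN1]
  exact absurd (lt_of_le_of_lt (le_trans hcs (Nat.mul_le_mul_left (n * N) hup)) key) (lt_irrefl _)

lemma fails (t n N : ℕ) (ht : 2 ≤ t) (hn : t ≤ n) (hle : N ≤ n / t)
    (c : Fin n × Fin n → Fin N) :
    ∃ E : Finset (Fin n × Fin n), isK2tCopy n t E ∧ ¬ hasOddColorClass c E := by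
  have hn2 : 2 ≤ n := le_trans ht hn
  rcases Nat.eq_zero_or_pos N with h0 | hN1
  · subst h0
    exact (c (⟨0, by omega⟩, ⟨0, by omega⟩)).elim0
  · have hNt : t * N ≤ n := by
      calc t * N = N * t := by ring
      _ ≤ (n / t) * t := Nat.mul_le_mul_right t hle
      _ ≤ n := Nat.div_mul_le_self n t
    obtain ⟨y, z, hyz, hcard⟩ := exists_agree t n N ht hn hN1 hNt c
    obtain ⟨S, hS, hScard⟩ := Finset.exists_subset_card_eq hcard
    have hagree : ∀ x ∈ S, c (x, y) = c (x, z) := fun x hx => (Finset.mem_filter.1 (hS hx)).2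
    refine ⟨S ×ˢ ({y, z} : Finset (Fin n)),
      Or.inr ⟨{y, z}, S, Finset.card_pair hyz, hScard, rfl⟩, ?_⟩
    rintro ⟨i, hodd⟩
    have hcardeq : ((S ×ˢ ({y, z} : Finset (Fin n))).filter fun e => c e = i).card
        = ∑ x ∈ S, (2 * if c (x, y) = i then 1 else 0) := by
      rw [Finset.card_filter, Finset.sum_product]
      apply Finset.sum_congr rfl
      intro x hx
      rw [Finset.sum_pair hyz, ← hagree x hx]
      ring
    have heven : Even ((S ×ˢ ({y, z} : Finset (Fin n))).filter fun e => c e = i).card := by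
      rw [hcardeq, ← Finset.mul_sum]
      exact even_two_mul _
    exact (Nat.not_odd_iff_even.2 heven) hodd

theorem stmt1 (t n : ℕ) (ht : 2 ≤ t) (hn : t ≤ n) :
    (∀ N : ℕ, N ≤ n / t → ∀ c : Fin n × Fin n → Fin N,
      ∃ E : Finset (Fin n × Fin n), isK2tCopy n t E ∧ ¬ hasOddColorClass c E) ∧
    (n : ℝ) / t < (oddRamseyK2t n t : ℝ) := by
  refine ⟨fun N hle c => fails t n N ht hn hle c, ?_⟩
  set Rset := {N : ℕ | ∃ c : Fin n × Fin n → Fin N,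
    ∀ E : Finset (Fin n × Fin n), isK2tCopy n t E → hasOddColorClass c E} with hRset
  have hne : Rset.Nonempty := by
    refine ⟨n * n, fun p => finProdFinEquiv p, ?_⟩
    intro E hE
    have hpos : 0 < E.card := by
      rcases hE with ⟨P, S, hP, hS, rfl⟩ | ⟨P, S, hP, hS, rfl⟩ <;>
        · rw [Finset.card_product, hP, hS]; positivity
    obtain ⟨e, he⟩ := Finset.card_pos.1 hpos
    refine ⟨finProdFinEquiv e, ?_⟩
    have hfe : E.filter (fun e' => finProdFinEquiv e' = finProdFinEquiv e) = {e} := by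
      ext e'
      simp only [Finset.mem_filter, Finset.mem_singleton]
      constructor
      · rintro ⟨_, h⟩
        exact finProdFinEquiv.injective h
      · rintro rfl
        exact ⟨he, rfl⟩
    rw [hfe, Finset.card_singleton]
    exact odd_one
  have hmem : oddRamseyK2t n t ∈ Rset := Nat.sInf_mem hne
  obtain ⟨c0, hc0⟩ := hmem
  have hgt : n / t < oddRamseyK2t n t := by
    by_contra h
    push_neg at h
    obtain ⟨E, hcopy, hnot⟩ := fails t n _ ht hn h c0
    exact hnot (hc0 E hcopy)
  have hnlt : n < (oddRamseyK2t n t) * t := (Nat.div_lt_iff_lt_mul (by omega)).1 hgt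
  rw [div_lt_iff₀ (by positivity)]
  exact_mod_cast hnlt
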